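/- Let τ > 0, q_b ∈ (0,1], q_e > 0 and m ∈ ℝ with m² ≤ q_b·q_e. On Ω = ℝ³ equipped with the product measure μ = γ ⊗ γ ⊗ γ of three standard Gaussians, define λ_e(ω) = √q_e·ω₁, λ_b(ω) = (m/√q_e)·ω₁ + √(q_b − m²/q_e)·ω₂, and ν(ω) = λ_b(ω) + √(1 − q_b)·ω₃, so that (ν, λ_b, λ_e) is centered jointly Gaussian with covariance matrix [[1, q_b, m],[q_b, q_b, m],[m, m, q_e]] (up to symmetry, with Cov(ν,λ_b) = q_b, Cov(ν,λ_e) = Cov(λ_b,λ_e) = m). Let F be the σ-algebra generated by λ_e and set τ' := √(τ² + 1 − q_b). Then μ-almost everywhere, μ[σ⋆(ν/τ) | F] = μ[σ⋆(λ_b/τ') | F] = σ⋆( (m/q_e)·λ_e / √(τ² + 1 − m²/q_e) ). In particular, the calibration of the logistic classifier σ(λ_e) with respect to the teacher σ⋆(ν/τ) equals its calibration with respect to the Bayes-optimal classifier σ⋆(λ_b/τ'): Δ_p = Δ̃_p for all p ∈ (0,1). -/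

import Mathlib

open MeasureTheory ProbabilityTheory Real
open scoped NNReal ENNReal

/-- The error function `erf x = (2/√π) ∫₀ˣ e^{-t²} dt`. -/
noncomputable def erf (x : ℝ) : ℝ := 2 / Real.sqrt Real.pi * ∫ t in (0:ℝ)..x, Real.exp (-t ^ 2)

/-- The complementary error function. -/
noncomputable def erfc (x : ℝ) : ℝ := 1 - erf x

/-- The standard Gaussian CDF `σ⋆(x) = (1/2) erfc(-x/√2)`. -/
noncomputable def sigmaStar (x : ℝ) : ℝ := (1 / 2) * erfc (-x / Real.sqrt 2)


noncomputable def phi (x : ℝ) : ℝ := (Real.sqrt (2 * π))⁻¹ * Real.exp (-x ^ 2 / 2)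

lemma phi_eq : phi = gaussianPDFReal 0 1 := by
  funext x
  simp [phi, gaussianPDFReal_def, mul_comm]

lemma phi_nonneg (x : ℝ) : 0 ≤ phi x := by unfold phi; positivity

lemma continuous_phi : Continuous phi := by unfold phi; continuity

lemma integrable_phi : Integrable phi := phi_eq ▸ integrable_gaussianPDFReal 0 1

lemma integral_phi : ∫ x, phi x = 1 := by
  rw [phi_eq]; exact integral_gaussianPDFReal_eq_one 0 one_ne_zero

lemma gaussian_integral_eq (g : ℝ → ℝ) :
    ∫ x, g x ∂(gaussianReal 0 1) = ∫ x, phi x * g x := by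
  rw [gaussianReal_of_var_ne_zero 0 one_ne_zero]
  rw [gaussianPDF_def, show (fun x => ENNReal.ofReal (gaussianPDFReal 0 1 x)) = fun x => ((Real.toNNReal (phi x) : ℝ≥0) : ℝ≥0∞) from by funext x; simp [phi_eq, ENNReal.ofReal], integral_withDensity_eq_integral_smul]
  · congr 1; funext x
    simp [NNReal.smul_def, Real.coe_toNNReal _ (phi_nonneg x)]
  · exact (continuous_phi.measurable).real_toNNReal



lemma erf_neg (x : ℝ) : erf (-x) = - erf x := by
  unfold erf
  have : (∫ t in (0:ℝ)..(-x), Real.exp (-t ^ 2)) = - ∫ t in (0:ℝ)..x, Real.exp (-t ^ 2) := by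
    have h : (∫ t in (0:ℝ)..(-x), Real.exp (-t ^ 2))
        = ∫ t in (0:ℝ)..(-x), Real.exp (-(-t) ^ 2) := by simp
    rw [h, intervalIntegral.integral_comp_neg (fun t => Real.exp (-t ^ 2)),
      show (-(0:ℝ)) = 0 by norm_num, neg_neg, intervalIntegral.integral_symm 0 x]
  rw [this]; ring

lemma sigmaStar_eq_erf (x : ℝ) : sigmaStar x = 1 / 2 + (Real.sqrt π)⁻¹ * ∫ t in (0:ℝ)..(x / Real.sqrt 2), Real.exp (-t ^ 2) := by
  unfold sigmaStar erfc
  rw [show -x / Real.sqrt 2 = -(x / Real.sqrt 2) by ring, erf_neg]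
  unfold erf; ring

lemma integrable_phi_Iic (x : ℝ) : IntegrableOn phi (Set.Iic x) := integrable_phi.integrableOn

lemma integral_phi_Iic_zero : ∫ u in Set.Iic (0:ℝ), phi u = 1 / 2 := by
  have hsym : ∫ u in Set.Iic (0:ℝ), phi u = ∫ u in Set.Ioi (0:ℝ), phi u := by
    have : ∫ u in Set.Iic (0:ℝ), phi (-u) = ∫ u in Set.Ioi (-(0:ℝ)), phi u :=
      integral_comp_neg_Iic 0 phi
    simp only [neg_zero] at this
    rw [← this]
    congr 1; funext u; unfold phi; ring_nf
  have hsplit : (∫ u in Set.Iic (0:ℝ), phi u) + ∫ u in Set.Ioi (0:ℝ), phi u = 1 := by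
    rw [intervalIntegral.integral_Iic_add_Ioi (integrable_phi.integrableOn) (integrable_phi.integrableOn)]
    exact integral_phi
  linarith [hsym ▸ hsplit]

lemma sigmaStar_eq_integral (x : ℝ) : sigmaStar x = ∫ u in Set.Iic x, phi u := by
  have hIic : (∫ u in Set.Iic x, phi u) - ∫ u in Set.Iic (0:ℝ), phi u
      = ∫ t in (0:ℝ)..x, phi t :=
    intervalIntegral.integral_Iic_sub_Iic (integrable_phi.integrableOn) (integrable_phi.integrableOn)
  have hsub : (∫ t in (0:ℝ)..x, phi t)
      = (Real.sqrt π)⁻¹ * ∫ t in (0:ℝ)..(x / Real.sqrt 2), Real.exp (-t ^ 2) := by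
    have h2 : (Real.sqrt 2) ≠ 0 := by positivity
    have : (∫ t in (0:ℝ)..x, phi t)
        = ∫ t in (0:ℝ)..x, (Real.sqrt (2*π))⁻¹ * Real.exp (-(t / Real.sqrt 2) ^ 2) := by
      congr 1; funext t; unfold phi
      rw [div_pow, Real.sq_sqrt (by norm_num : (2:ℝ) ≥ 0)]
      ring_nf
    rw [this, intervalIntegral.integral_const_mul,
      intervalIntegral.integral_comp_div (fun t => Real.exp (-t ^ 2)) h2]
    simp only [zero_div, smul_eq_mul]
    rw [Real.sqrt_mul (by norm_num : (0:ℝ) ≤ 2) π]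
    field_simp
  rw [sigmaStar_eq_erf, ← hsub, ← hIic, integral_phi_Iic_zero]
  ring

lemma sigmaStar_nonneg (x : ℝ) : 0 ≤ sigmaStar x := by
  rw [sigmaStar_eq_integral]
  exact setIntegral_nonneg measurableSet_Iic (fun u _ => phi_nonneg u)

lemma sigmaStar_le_one (x : ℝ) : sigmaStar x ≤ 1 := by
  rw [sigmaStar_eq_integral, ← integral_phi]
  exact setIntegral_le_integral integrable_phi (Filter.Eventually.of_forall phi_nonneg)

lemma continuous_sigmaStar : Continuous sigmaStar := by
  have : Continuous erf := by
    unfold erf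
    exact continuous_const.mul (intervalIntegral.continuous_primitive
      (fun a b => (Continuous.intervalIntegrable (by continuity) a b)) 0)
  unfold sigmaStar erfc
  continuity

/-- Affine change of variables in an `Iic` set integral. -/
lemma setIntegral_Iic_affine {f : ℝ → ℝ} (hf : Integrable f) {t : ℝ} (ht : 0 < t)
    (k c : ℝ) :
    ∫ v in Set.Iic (t * c - k), (1 / t) * f ((v + k) / t) = ∫ u in Set.Iic c, f u := by
  rw [← integral_indicator measurableSet_Iic, ← integral_indicator measurableSet_Iic]
  have h1 : ∀ v, (Set.Iic (t * c - k)).indicator (fun v => (1 / t) * f ((v + k) / t)) v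
      = (1 / t) * (Set.Iic c).indicator f ((v + k) / t) := by
    intro v
    have hiff : v ∈ Set.Iic (t * c - k) ↔ (v + k) / t ∈ Set.Iic c := by
      simp only [Set.mem_Iic]
      rw [div_le_iff₀ ht]
      constructor <;> intro h <;> linarith
    by_cases hv : v ∈ Set.Iic (t * c - k)
    · rw [Set.indicator_of_mem hv, Set.indicator_of_mem (hiff.mp hv)]
    · rw [Set.indicator_of_notMem hv, Set.indicator_of_notMem (fun h => hv (hiff.mpr h))]
      ring
  simp_rw [h1]
  rw [integral_const_mul]
  have h2 : (∫ v : ℝ, (Set.Iic c).indicator f ((v + k) / t))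
      = ∫ v : ℝ, (Set.Iic c).indicator f (v / t) :=
    integral_add_right_eq_self (fun v => (Set.Iic c).indicator f (v / t)) k
  rw [h2, MeasureTheory.Measure.integral_comp_div ((Set.Iic c).indicator f) t,
    abs_of_pos ht, smul_eq_mul]
  field_simp

lemma sigmaStar_affine_integral {t : ℝ} (ht : 0 < t) (k : ℝ) :
    ∫ v in Set.Iic (t * ((k) / t) - 0), (1/t) * phi ((v + 0)/t) = sigmaStar (k / t) := by
  rw [setIntegral_Iic_affine integrable_phi ht 0 (k / t), ← sigmaStar_eq_integral]

lemma sigmaStar_rep {t : ℝ} (ht : 0 < t) (a s z : ℝ) :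
    sigmaStar ((a + s * z) / t) = ∫ v in Set.Iic a, (1 / t) * phi ((v + s * z) / t) := by
  rw [sigmaStar_eq_integral, ← setIntegral_Iic_affine integrable_phi ht (s * z) ((a + s * z) / t)]
  have h : t * ((a + s * z) / t) - s * z = a := by field_simp; ring
  rw [h]

lemma key_gaussian_smoothing (a s t : ℝ) (ht : 0 < t) :
    ∫ z, sigmaStar ((a + s * z) / t) ∂(gaussianReal 0 1)
      = sigmaStar (a / Real.sqrt (t ^ 2 + s ^ 2)) := by
  set r2 : ℝ := t ^ 2 + s ^ 2 with hr2def
  have hr2 : 0 < r2 := by positivity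
  set r : ℝ := Real.sqrt r2 with hrdef
  have hr : 0 < r := Real.sqrt_pos.mpr hr2
  have hrsq : r ^ 2 = r2 := Real.sq_sqrt hr2.le
  set F : ℝ → ℝ → ℝ := fun z v => phi z * ((1 / t) * phi ((v + s * z) / t)) with hF
  have hFnonneg : ∀ z v, 0 ≤ F z v := by
    intro z v
    exact mul_nonneg (phi_nonneg z) (mul_nonneg (by positivity) (phi_nonneg _))
  have hcont : Continuous (Function.uncurry F) := by
    apply Continuous.mul
    · exact continuous_phi.comp continuous_fst
    · exact continuous_const.mul (continuous_phi.comp (by fun_prop))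
  have hval : ∀ z, (∫ v in Set.Iic a, F z v) = phi z * sigmaStar ((a + s * z) / t) := by
    intro z
    rw [MeasureTheory.integral_const_mul, ← sigmaStar_rep ht]
  have hint1 : ∀ z, Integrable (F z) (volume.restrict (Set.Iic a)) := by
    intro z
    apply Integrable.integrableOn
    exact (((integrable_phi.comp_div ht.ne').comp_add_right (s * z)).const_mul _).const_mul _
  have hmaj : (fun z => ∫ v in Set.Iic a, ‖F z v‖)
      = fun z => phi z * sigmaStar ((a + s * z) / t) := by
    funext z
    rw [show (fun v => ‖F z v‖) = F z from funext fun v => Real.norm_of_nonneg (hFnonneg z v)]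
    exact hval z
  have hint2 : Integrable (fun z => ∫ v in Set.Iic a, ‖F z v‖) volume := by
    rw [hmaj]
    apply Integrable.mono' integrable_phi
    · exact (continuous_phi.mul (continuous_sigmaStar.comp (by fun_prop))).aestronglyMeasurable
    · refine Filter.Eventually.of_forall fun z => ?_
      rw [Real.norm_of_nonneg (mul_nonneg (phi_nonneg z) (sigmaStar_nonneg _))]
      calc phi z * sigmaStar ((a + s * z) / t) ≤ phi z * 1 :=
            mul_le_mul_of_nonneg_left (sigmaStar_le_one _) (phi_nonneg z)
        _ = phi z := mul_one _
  have hProdInt : Integrable (Function.uncurry F) (volume.prod (volume.restrict (Set.Iic a))) :=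
    (integrable_prod_iff hcont.aestronglyMeasurable).mpr
      ⟨Filter.Eventually.of_forall hint1, hint2⟩
  have hstep : (fun z => phi z * sigmaStar ((a + s * z) / t))
      = fun z => ∫ v in Set.Iic a, F z v := by
    funext z; rw [hval z]
  have hinner : ∀ v : ℝ, (∫ z, F z v) = (1 / r) * phi (v / r) := by
    intro v
    have hiden : ∀ z : ℝ, (-(z ^ 2) / 2) + (-(((v + s * z) / t) ^ 2) / 2)
        = -(r2 / (2 * t ^ 2)) * (z + s * v / r2) ^ 2 + (-(v ^ 2) / (2 * r2)) := by
      intro z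
      rw [hr2def]
      field_simp
      ring
    have hFz : ∀ z : ℝ, F z v
        = ((1 / t) * (Real.sqrt (2 * π))⁻¹ * (Real.sqrt (2 * π))⁻¹
            * Real.exp (-(v ^ 2) / (2 * r2)))
          * Real.exp (-(r2 / (2 * t ^ 2)) * (z + s * v / r2) ^ 2) := by
      intro z
      have hmul : ∀ (x y : ℝ),
          ((Real.sqrt (2 * π))⁻¹ * Real.exp x) * ((1 / t) * ((Real.sqrt (2 * π))⁻¹ * Real.exp y))
            = ((1 / t) * (Real.sqrt (2 * π))⁻¹ * (Real.sqrt (2 * π))⁻¹) * Real.exp (x + y) := by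
        intro x y; rw [Real.exp_add]; ring
      simp only [hF, phi]
      rw [hmul, hiden z, Real.exp_add]
      ring
    have hgauss : (∫ z, Real.exp (-(r2 / (2 * t ^ 2)) * (z + s * v / r2) ^ 2))
        = Real.sqrt (π / (r2 / (2 * t ^ 2))) := by
      rw [integral_add_right_eq_self (fun z => Real.exp (-(r2 / (2 * t ^ 2)) * z ^ 2)) (s * v / r2)]
      exact integral_gaussian _
    have hsqrt : Real.sqrt (π / (r2 / (2 * t ^ 2))) = Real.sqrt (2 * π) * t / r := by
      rw [show π / (r2 / (2 * t ^ 2)) = (2 * π) * t ^ 2 / r2 by field_simp,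
        show (2 * π) * t ^ 2 / r2 = ((2 * π) * t ^ 2) / r2 by ring,
        Real.sqrt_div (by positivity) r2, Real.sqrt_mul (by positivity) (t ^ 2),
        Real.sqrt_sq ht.le]
    have hexp2 : Real.exp (-(v / r) ^ 2 / 2) = Real.exp (-(v ^ 2) / (2 * r2)) := by
      congr 1
      rw [div_pow, hrsq]
      field_simp
    calc (∫ z, F z v)
        = ∫ z, ((1 / t) * (Real.sqrt (2 * π))⁻¹ * (Real.sqrt (2 * π))⁻¹
            * Real.exp (-(v ^ 2) / (2 * r2)))
          * Real.exp (-(r2 / (2 * t ^ 2)) * (z + s * v / r2) ^ 2) :=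
          integral_congr_ae (Filter.Eventually.of_forall hFz)
      _ = ((1 / t) * (Real.sqrt (2 * π))⁻¹ * (Real.sqrt (2 * π))⁻¹
            * Real.exp (-(v ^ 2) / (2 * r2)))
          * ∫ z, Real.exp (-(r2 / (2 * t ^ 2)) * (z + s * v / r2) ^ 2) :=
          MeasureTheory.integral_const_mul _ _
      _ = (1 / r) * phi (v / r) := by
          rw [hgauss, hsqrt]
          unfold phi
          rw [hexp2]
          have hs2pi : Real.sqrt (2 * π) ≠ 0 := by positivity
          field_simp
  rw [gaussian_integral_eq]
  calc ∫ z, phi z * sigmaStar ((a + s * z) / t)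
      = ∫ z, ∫ v in Set.Iic a, F z v := by rw [hstep]
    _ = ∫ v in Set.Iic a, ∫ z, F z v := integral_integral_swap hProdInt
    _ = ∫ v in Set.Iic a, (1 / r) * phi (v / r) :=
        setIntegral_congr_fun measurableSet_Iic (fun v _ => hinner v)
    _ = ∫ u in Set.Iic (a / r), phi u := by
        have h := setIntegral_Iic_affine integrable_phi hr 0 (a / r)
        have e1 : r * (a / r) - 0 = a := by field_simp; ring
        rw [e1] at h
        simp only [add_zero] at h
        exact h
    _ = sigmaStar (a / r) := (sigmaStar_eq_integral _).symm

lemma condexp_aux {qe : ℝ} (hqe : 0 < qe)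
    (g : ℝ × ℝ × ℝ → ℝ) (hgc : Continuous g) (hg0 : ∀ ω, 0 ≤ g ω) (hg1 : ∀ ω, g ω ≤ 1)
    (H : ℝ → ℝ) (hHc : Continuous H) (hH0 : ∀ x, 0 ≤ H x) (hH1 : ∀ x, H x ≤ 1)
    (hfiber : ∀ x : ℝ, ∫ y, g (x, y) ∂((gaussianReal 0 1).prod (gaussianReal 0 1)) = H x) :
    ((gaussianReal 0 1).prod ((gaussianReal 0 1).prod (gaussianReal 0 1)))[g |
        MeasurableSpace.comap (fun ω : ℝ × ℝ × ℝ => Real.sqrt qe * ω.1)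
          (inferInstance : MeasurableSpace ℝ)]
      =ᵐ[(gaussianReal 0 1).prod ((gaussianReal 0 1).prod (gaussianReal 0 1))]
      fun ω => H ω.1 := by
  set γ : Measure ℝ := gaussianReal 0 1 with hγ
  set κ : Measure (ℝ × ℝ) := γ.prod γ with hκ
  set μ : Measure (ℝ × ℝ × ℝ) := γ.prod κ with hμ
  set lamE : ℝ × ℝ × ℝ → ℝ := fun ω => Real.sqrt qe * ω.1 with hlamE
  have hsqe : (0:ℝ) < Real.sqrt qe := Real.sqrt_pos.mpr hqe
  have hle : MeasurableSpace.comap lamE (inferInstance : MeasurableSpace ℝ)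
      ≤ (inferInstance : MeasurableSpace (ℝ × ℝ × ℝ)) := by
    rintro s ⟨t, ht, rfl⟩
    exact (measurable_fst.const_mul _) ht
  have hbd : ∀ (f : ℝ × ℝ × ℝ → ℝ), Continuous f → (∀ ω, 0 ≤ f ω) → (∀ ω, f ω ≤ 1)
      → Integrable f μ := by
    intro f hfc hf0 hf1
    apply Integrable.mono' (integrable_const (1:ℝ)) hfc.aestronglyMeasurable
    exact Filter.Eventually.of_forall fun ω => by
      rw [Real.norm_of_nonneg (hf0 ω)]; exact hf1 ω
  have hHfst : Continuous (fun ω : ℝ × ℝ × ℝ => H ω.1) := hHc.comp continuous_fst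
  symm
  apply ae_eq_condExp_of_forall_setIntegral_eq hle
    (hbd g hgc hg0 hg1)
  · intro s _ _
    exact (hbd _ hHfst (fun ω => hH0 _) (fun ω => hH1 _)).integrableOn
  · rintro s ⟨t, ht, rfl⟩ -
    set A : Set ℝ := (fun x : ℝ => Real.sqrt qe * x) ⁻¹' t with hA
    have hAmeas : MeasurableSet A := (measurable_const_mul _) ht
    have hset : lamE ⁻¹' t = A ×ˢ (Set.univ : Set (ℝ × ℝ)) := by
      rw [Set.prod_univ]; rfl
    have hrestrict : μ.restrict (lamE ⁻¹' t) = (γ.restrict A).prod κ := by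
      rw [hset, ← Measure.prod_restrict, Measure.restrict_univ]
    have hint_of : ∀ (f : ℝ × ℝ × ℝ → ℝ), Continuous f → (∀ ω, 0 ≤ f ω) → (∀ ω, f ω ≤ 1)
        → Integrable f ((γ.restrict A).prod κ) := by
      intro f hfc hf0 hf1
      apply Integrable.mono' (integrable_const (1:ℝ)) hfc.aestronglyMeasurable
      exact Filter.Eventually.of_forall fun ω => by
        rw [Real.norm_of_nonneg (hf0 ω)]; exact hf1 ω
    have h1 : ∫ ω in lamE ⁻¹' t, H ω.1 ∂μ = ∫ x in A, H x ∂γ := by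
      rw [hrestrict, integral_prod _ (hint_of _ hHfst (fun ω => hH0 _) (fun ω => hH1 _))]
      simp only [integral_const]
      congr 1
      funext x
      simp [hκ]
    have h2 : ∫ ω in lamE ⁻¹' t, g ω ∂μ = ∫ x in A, H x ∂γ := by
      rw [hrestrict, integral_prod _ (hint_of _ hgc hg0 hg1)]
      exact setIntegral_congr_fun hAmeas fun x _ => hfiber x
    rw [h1, h2]
  · refine StronglyMeasurable.aestronglyMeasurable ?_
    have hrepr : (fun ω : ℝ × ℝ × ℝ => H ω.1)
        = (fun u : ℝ => H (u / Real.sqrt qe)) ∘ lamE := by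
      funext ω
      simp only [Function.comp, hlamE]
      rw [mul_comm, mul_div_assoc, div_self hsqe.ne', mul_one]
    rw [hrepr]
    have hmeasE : Measurable[MeasurableSpace.comap lamE (inferInstance : MeasurableSpace ℝ)]
        lamE := fun s hs => ⟨s, hs, rfl⟩
    exact ((hHc.comp (continuous_id.div_const _)).measurable.comp hmeasE).stronglyMeasurable

/-- For the jointly Gaussian triple `(ν, λ_b, λ_e)` with covariance
`[[1, q_b, m], [q_b, q_b, m], [m, m, q_e]]`, realized on the product of three standard
Gaussians, the conditional expectations of the teacher confidence `σ⋆(ν/τ)` and of the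
Bayes-optimal confidence `σ⋆(λ_b/τ')` (with `τ' = √(τ² + 1 − q_b)`) given `λ_e` coincide,
both being `σ⋆((m/q_e)·λ_e / √(τ² + 1 − m²/q_e))`.  In particular the calibration of the
logistic classifier with respect to the teacher equals that with respect to Bayes. -/
theorem condexp_teacher_eq_condexp_bayes_given_erm
    (τ qb qe m : ℝ) (hτ : 0 < τ) (hqb : 0 < qb) (hqb1 : qb ≤ 1) (hqe : 0 < qe)
    (hm : m ^ 2 ≤ qb * qe)
    (μ : Measure (ℝ × ℝ × ℝ))
    (hμ : μ = (gaussianReal 0 1).prod ((gaussianReal 0 1).prod (gaussianReal 0 1)))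
    (lamE lamB ν : ℝ × ℝ × ℝ → ℝ)
    (hlamE : lamE = fun ω => Real.sqrt qe * ω.1)
    (hlamB : lamB = fun ω => (m / Real.sqrt qe) * ω.1 + Real.sqrt (qb - m ^ 2 / qe) * ω.2.1)
    (hν : ν = fun ω => lamB ω + Real.sqrt (1 - qb) * ω.2.2)
    (F : MeasurableSpace (ℝ × ℝ × ℝ))
    (hF : F = MeasurableSpace.comap lamE (inferInstance : MeasurableSpace ℝ))
    (τ' : ℝ) (hτ' : τ' = Real.sqrt (τ ^ 2 + 1 - qb)) :
    (μ[(fun ω => sigmaStar (ν ω / τ)) | F]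
        =ᵐ[μ] fun ω => sigmaStar ((m / qe) * lamE ω / Real.sqrt (τ ^ 2 + 1 - m ^ 2 / qe))) ∧
    (μ[(fun ω => sigmaStar (lamB ω / τ')) | F]
        =ᵐ[μ] fun ω => sigmaStar ((m / qe) * lamE ω / Real.sqrt (τ ^ 2 + 1 - m ^ 2 / qe))) := by
  subst hlamB hν hlamE hF hτ' hμ
  set γ : Measure ℝ := gaussianReal 0 1 with hγ
  have hsqe : (0:ℝ) < Real.sqrt qe := Real.sqrt_pos.mpr hqe
  have hmq : m ^ 2 / qe ≤ qb := by
    rw [div_le_iff₀ hqe]; linarith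
  have hb2 : Real.sqrt (qb - m ^ 2 / qe) ^ 2 = qb - m ^ 2 / qe :=
    Real.sq_sqrt (by linarith)
  have hd2 : Real.sqrt (1 - qb) ^ 2 = 1 - qb := Real.sq_sqrt (by linarith)
  have hτ'pos : (0:ℝ) < Real.sqrt (τ ^ 2 + 1 - qb) :=
    Real.sqrt_pos.mpr (by nlinarith)
  have hτ'2 : Real.sqrt (τ ^ 2 + 1 - qb) ^ 2 = τ ^ 2 + 1 - qb :=
    Real.sq_sqrt (by nlinarith)
  have ht2pos : (0:ℝ) < Real.sqrt (τ ^ 2 + Real.sqrt (1 - qb) ^ 2) :=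
    Real.sqrt_pos.mpr (by nlinarith)
  have ht22 : Real.sqrt (τ ^ 2 + Real.sqrt (1 - qb) ^ 2) ^ 2 = τ ^ 2 + Real.sqrt (1 - qb) ^ 2 :=
    Real.sq_sqrt (by positivity)
  have hcx : ∀ x : ℝ, m / Real.sqrt qe * x = m / qe * (Real.sqrt qe * x) := by
    intro x
    have hss : Real.sqrt qe * Real.sqrt qe = qe := Real.mul_self_sqrt hqe.le
    rw [div_mul_eq_mul_div, div_mul_eq_mul_div, div_eq_div_iff hsqe.ne' hqe.ne']
    linear_combination (-(m * x)) * hss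
  set H : ℝ → ℝ := fun x =>
    sigmaStar (m / qe * (Real.sqrt qe * x) / Real.sqrt (τ ^ 2 + 1 - m ^ 2 / qe)) with hH
  have hHc : Continuous H := continuous_sigmaStar.comp (by fun_prop)
  constructor
  · -- teacher
    have hfiber : ∀ x : ℝ,
        ∫ y : ℝ × ℝ, sigmaStar ((m / Real.sqrt qe * x + Real.sqrt (qb - m ^ 2 / qe) * y.1
            + Real.sqrt (1 - qb) * y.2) / τ) ∂(γ.prod γ) = H x := by
      intro x
      have hint : Integrable (fun y : ℝ × ℝ =>
          sigmaStar ((m / Real.sqrt qe * x + Real.sqrt (qb - m ^ 2 / qe) * y.1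
            + Real.sqrt (1 - qb) * y.2) / τ)) (γ.prod γ) := by
        have hc1 : Continuous fun y : ℝ × ℝ =>
            sigmaStar ((m / Real.sqrt qe * x + Real.sqrt (qb - m ^ 2 / qe) * y.1
              + Real.sqrt (1 - qb) * y.2) / τ) := by
          apply continuous_sigmaStar.comp
          fun_prop
        apply Integrable.mono' (integrable_const (1:ℝ)) hc1.aestronglyMeasurable
        exact Filter.Eventually.of_forall fun y => by
          rw [Real.norm_of_nonneg (sigmaStar_nonneg _)]; exact sigmaStar_le_one _
      rw [integral_prod _ hint]
      have hin : ∀ y1 : ℝ, ∫ y2, sigmaStar ((m / Real.sqrt qe * x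
            + Real.sqrt (qb - m ^ 2 / qe) * y1 + Real.sqrt (1 - qb) * y2) / τ) ∂γ
          = sigmaStar ((m / Real.sqrt qe * x + Real.sqrt (qb - m ^ 2 / qe) * y1)
              / Real.sqrt (τ ^ 2 + Real.sqrt (1 - qb) ^ 2)) := fun y1 =>
        key_gaussian_smoothing _ _ _ hτ
      rw [integral_congr_ae (Filter.Eventually.of_forall hin),
        key_gaussian_smoothing _ _ _ ht2pos]
      simp only [hH]
      rw [← hcx x]
      congr 2
      rw [ht22, hd2, hb2]
      ring
    exact condexp_aux hqe _
      (continuous_sigmaStar.comp (by fun_prop))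
      (fun ω => sigmaStar_nonneg _) (fun ω => sigmaStar_le_one _)
      H hHc (fun x => sigmaStar_nonneg _) (fun x => sigmaStar_le_one _) hfiber
  · -- bayes
    have hfiber : ∀ x : ℝ,
        ∫ y : ℝ × ℝ, sigmaStar ((m / Real.sqrt qe * x + Real.sqrt (qb - m ^ 2 / qe) * y.1)
            / Real.sqrt (τ ^ 2 + 1 - qb)) ∂(γ.prod γ) = H x := by
      intro x
      have hint : Integrable (fun y : ℝ × ℝ =>
          sigmaStar ((m / Real.sqrt qe * x + Real.sqrt (qb - m ^ 2 / qe) * y.1)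
            / Real.sqrt (τ ^ 2 + 1 - qb))) (γ.prod γ) := by
        have hc1 : Continuous fun y : ℝ × ℝ =>
            sigmaStar ((m / Real.sqrt qe * x + Real.sqrt (qb - m ^ 2 / qe) * y.1)
              / Real.sqrt (τ ^ 2 + 1 - qb)) := by
          apply continuous_sigmaStar.comp
          fun_prop
        apply Integrable.mono' (integrable_const (1:ℝ)) hc1.aestronglyMeasurable
        exact Filter.Eventually.of_forall fun y => by
          rw [Real.norm_of_nonneg (sigmaStar_nonneg _)]; exact sigmaStar_le_one _
      rw [integral_prod _ hint]
      simp only [integral_const, measure_univ, ENNReal.toReal_one, probReal_univ, one_smul]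
      rw [key_gaussian_smoothing _ _ _ hτ'pos]
      simp only [hH]
      rw [← hcx x]
      congr 2
      rw [hτ'2, hb2]
      ring
    exact condexp_aux hqe _
      (continuous_sigmaStar.comp (by fun_prop))
      (fun ω => sigmaStar_nonneg _) (fun ω => sigmaStar_le_one _)
      H hHc (fun x => sigmaStar_nonneg _) (fun x => sigmaStar_le_one _) hfiber
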